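/- If A and B are positive semidefinite n×n matrices forming an antimonotone pair, and Z is normal, then the Frobenius norm of AZB is at least the Frobenius norm of ZAB. -/

import Mathlib

open Matrix ComplexOrder

/-- Apply a real function to a Hermitian matrix via the spectral decomposition. -/
noncomputable def hermFun {n : ℕ} {C : Matrix (Fin n) (Fin n) ℂ} (hC : C.IsHermitian)
    (f : ℝ → ℝ) : Matrix (Fin n) (Fin n) ℂ :=
  (hC.eigenvectorUnitary : Matrix (Fin n) (Fin n) ℂ) *
    Matrix.diagonal (fun i => (f (hC.eigenvalues i) : ℂ)) *
    (star (hC.eigenvectorUnitary : Matrix (Fin n) (Fin n) ℂ))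

/-- `(A, B)` is a monotone pair: `A = f(C)`, `B = g(C)` for a Hermitian `C` and
nondecreasing real functions `f`, `g`. -/
def MonotonePair {n : ℕ} (A B : Matrix (Fin n) (Fin n) ℂ) : Prop :=
  ∃ C : Matrix (Fin n) (Fin n) ℂ, ∃ hC : C.IsHermitian, ∃ f g : ℝ → ℝ,
    Monotone f ∧ Monotone g ∧ A = hermFun hC f ∧ B = hermFun hC g

/-- `(A, B)` is an antimonotone pair: `A = f(C)`, `B = g(C)` for a Hermitian `C`,
`f` nondecreasing and `g` nonincreasing. -/
def AntimonotonePair {n : ℕ} (A B : Matrix (Fin n) (Fin n) ℂ) : Prop :=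
  ∃ C : Matrix (Fin n) (Fin n) ℂ, ∃ hC : C.IsHermitian, ∃ f g : ℝ → ℝ,
    Monotone f ∧ Antitone g ∧ A = hermFun hC f ∧ B = hermFun hC g

/-- The Frobenius (Hilbert–Schmidt) norm `(Tr X*X)^(1/2)`. -/
noncomputable def frobNorm {n : ℕ} (X : Matrix (Fin n) (Fin n) ℂ) : ℝ :=
  Real.sqrt ((Matrix.trace (Xᴴ * X)).re)

section Comb


variable {n : ℕ}

lemma swap_phi (s : Fin n → Fin n → ℝ) (hbal : ∀ j, ∑ i, s i j = ∑ i, s j i)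
    (φ : Fin n → ℝ) :
    ∑ i, ∑ j, s i j * φ j = ∑ i, ∑ j, s i j * φ i := by
  rw [Finset.sum_comm]
  simp_rw [← Finset.sum_mul]
  exact Finset.sum_congr rfl fun j _ => by rw [hbal j]

lemma indic_le (s : Fin n → Fin n → ℝ) (hs : ∀ i j, 0 ≤ s i j)
    (hbal : ∀ j, ∑ i, s i j = ∑ i, s j i) (lam : Fin n → ℝ)
    (S T : Finset (Fin n))
    (hS : ∀ i j, lam i ≤ lam j → i ∈ S → j ∈ S)
    (hT : ∀ i j, lam j ≤ lam i → i ∈ T → j ∈ T) :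
    ∑ i ∈ S ∩ T, ∑ j, s i j ≤ ∑ i ∈ S, ∑ j ∈ T, s i j := by
  rcases (S ∩ T).eq_empty_or_nonempty with he | ⟨i0, hi0⟩
  · rw [he, Finset.sum_empty]
    exact Finset.sum_nonneg fun i _ => Finset.sum_nonneg fun j _ => hs i j
  · rw [Finset.mem_inter] at hi0
    have hcompl : ∀ j, j ∉ S → j ∈ T := by
      intro j hj
      rcases le_total (lam i0) (lam j) with h | h
      · exact absurd (hS i0 j h hi0.1) hj
      · exact hT i0 j h hi0.2
    have h1 : ∑ i ∈ S, ∑ j ∈ T, s i j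
        = ∑ j ∈ T, (∑ i, s j i) - ∑ j ∈ T, ∑ i ∈ Sᶜ, s i j := by
      rw [Finset.sum_comm, ← Finset.sum_sub_distrib]
      refine Finset.sum_congr rfl fun j _ => ?_
      have := Finset.sum_add_sum_compl S (fun i => s i j)
      rw [← hbal j]
      linarith
    have h2 : ∑ j ∈ T, ∑ i ∈ Sᶜ, s i j ≤ ∑ i ∈ Sᶜ, ∑ j, s i j :=
      calc ∑ j ∈ T, ∑ i ∈ Sᶜ, s i j
          ≤ ∑ j, ∑ i ∈ Sᶜ, s i j := Finset.sum_le_sum_of_subset_of_nonneg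
            (Finset.subset_univ T) (fun j _ _ => Finset.sum_nonneg fun i _ => hs i j)
        _ = ∑ i ∈ Sᶜ, ∑ j, s i j := Finset.sum_comm
    have hsub : Sᶜ ⊆ T := fun j hj => hcompl j (Finset.mem_compl.mp hj)
    have h3 : ∑ i ∈ S ∩ T, ∑ j, s i j + ∑ i ∈ Sᶜ, ∑ j, s i j = ∑ j ∈ T, ∑ i, s j i := by
      have hd : T \ Sᶜ = S ∩ T := by
        ext a
        simp only [Finset.mem_sdiff, Finset.mem_inter, Finset.mem_compl]
        tauto
      have := Finset.sum_sdiff (f := fun i => ∑ j, s i j) hsub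
      rw [hd] at this
      exact this
    linarith

lemma mono_induction (lam : Fin n → ℝ) (P : (Fin n → ℝ) → Prop)
    (hconst : ∀ c : ℝ, P (fun _ => c))
    (hadd : ∀ (x : Fin n → ℝ) (c : ℝ) (S : Finset (Fin n)),
      (∀ i j, lam i ≤ lam j → i ∈ S → j ∈ S) → 0 ≤ c → P x →
      P (fun i => x i + if i ∈ S then c else 0)) :
    ∀ x : Fin n → ℝ, (∀ i j, lam i ≤ lam j → x i ≤ x j) → P x := by
  suffices h : ∀ k (x : Fin n → ℝ), (Finset.image x Finset.univ).card ≤ k →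
      (∀ i j, lam i ≤ lam j → x i ≤ x j) → P x by
    intro x hx; exact h _ x le_rfl hx
  intro k
  induction k with
  | zero =>
    intro x hcard _
    have he : Finset.image x Finset.univ = ∅ :=
      Finset.card_eq_zero.mp (le_antisymm hcard (Nat.zero_le _))
    have hx0 : x = fun _ => (0 : ℝ) := by
      funext i
      exact absurd (Finset.mem_image_of_mem x (Finset.mem_univ i)) (by simp [he])
    rw [hx0]; exact hconst 0
  | succ k ih =>
    intro x hcard hx
    by_cases h1 : (Finset.image x Finset.univ).card ≤ 1
    · by_cases hn : Nonempty (Fin n)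
      · obtain ⟨i0⟩ := hn
        have : x = fun _ => x i0 := by
          funext i
          exact Finset.card_le_one.mp h1 _ (Finset.mem_image_of_mem x (Finset.mem_univ i))
            _ (Finset.mem_image_of_mem x (Finset.mem_univ i0))
        rw [this]; exact hconst _
      · have : x = fun _ => (0 : ℝ) := by
          funext i; exact absurd ⟨i⟩ hn
        rw [this]; exact hconst 0
    · push_neg at h1
      set I := Finset.image x Finset.univ with hIdef
      have hIne : I.Nonempty := Finset.card_pos.mp (by omega)
      set m := I.min' hIne with hmdef
      have hmI : m ∈ I := I.min'_mem hIne
      have hI'ne : (I.erase m).Nonempty := by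
        rw [← Finset.card_pos, Finset.card_erase_of_mem hmI]; omega
      set m2 := (I.erase m).min' hI'ne with hm2def
      have hm2 : m2 ∈ I.erase m := (I.erase m).min'_mem hI'ne
      have hmm2 : m < m2 :=
        lt_of_le_of_ne (I.min'_le _ (Finset.mem_of_mem_erase hm2))
          (Ne.symm (Finset.ne_of_mem_erase hm2))
      set δ := m2 - m with hδdef
      have hδ : 0 ≤ δ := by simp [hδdef]; linarith
      set S := Finset.univ.filter (fun i => m < x i) with hSdef
      have hmle : ∀ i, m ≤ x i := fun i =>
        I.min'_le _ (Finset.mem_image_of_mem x (Finset.mem_univ i))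
      have hxm : ∀ i, i ∉ S → x i = m := by
        intro i hi
        rw [hSdef, Finset.mem_filter] at hi
        push_neg at hi
        exact le_antisymm (hi (Finset.mem_univ i)) (hmle i)
      have hmemS : ∀ i, i ∈ S ↔ m < x i := by
        intro i; rw [hSdef, Finset.mem_filter]; simp
      have hm2le : ∀ i, i ∈ S → m2 ≤ x i := by
        intro i hi
        exact (I.erase m).min'_le _ (Finset.mem_erase.mpr
          ⟨ne_of_gt ((hmemS i).mp hi), Finset.mem_image_of_mem x (Finset.mem_univ i)⟩)
      set x' := fun i => if i ∈ S then x i - δ else m with hx'def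
      have hSup : ∀ i j, lam i ≤ lam j → i ∈ S → j ∈ S := by
        intro i j hij hi
        rw [hmemS] at hi ⊢
        exact lt_of_lt_of_le hi (hx i j hij)
      have hxeq : x = fun i => x' i + if i ∈ S then δ else 0 := by
        funext i
        by_cases h : i ∈ S
        · simp [hx'def, h]
        · simp [hx'def, h, hxm i h]
      have hx'mono : ∀ i j, lam i ≤ lam j → x' i ≤ x' j := by
        intro i j hij
        by_cases hi : i ∈ S <;> by_cases hj : j ∈ S <;> simp [hx'def, hi, hj]
        · linarith [hx i j hij]
        · exact absurd (hSup i j hij hi) hj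
        · linarith [hm2le j hj]
      have hcard' : (Finset.image x' Finset.univ).card ≤ k := by
        set h : ℝ → ℝ := fun v => if m < v then v - δ else m with hhdef
        have hsub : Finset.image x' Finset.univ ⊆ Finset.image h I := by
          intro v hv
          obtain ⟨i, _, hiv⟩ := Finset.mem_image.mp hv
          refine Finset.mem_image.mpr ⟨x i, Finset.mem_image_of_mem x (Finset.mem_univ i), ?_⟩
          by_cases hi : i ∈ S
          · rw [hhdef]; simp only [← hiv, hx'def]
            rw [if_pos ((hmemS i).mp hi), if_pos hi]
          · rw [hhdef]; simp only [← hiv, hx'def]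
            rw [if_neg (by rw [hxm i hi]; exact lt_irrefl m), if_neg hi]
        have hsub2 : Finset.image h I ⊆ Finset.image h (I.erase m2) := by
          intro v hv
          obtain ⟨w, hw, hwv⟩ := Finset.mem_image.mp hv
          by_cases hwm2 : w = m2
          · refine Finset.mem_image.mpr ⟨m, Finset.mem_erase.mpr ⟨ne_of_lt hmm2, hmI⟩, ?_⟩
            rw [hhdef]; simp only
            rw [if_neg (lt_irrefl m), ← hwv, hwm2, hhdef]
            simp only
            rw [if_pos hmm2, hδdef]
            ring
          · exact Finset.mem_image.mpr ⟨w, Finset.mem_erase.mpr ⟨hwm2, hw⟩, hwv⟩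
        calc (Finset.image x' Finset.univ).card
            ≤ (Finset.image h (I.erase m2)).card :=
              Finset.card_le_card (hsub.trans hsub2)
          _ ≤ (I.erase m2).card := Finset.card_image_le
          _ = I.card - 1 := Finset.card_erase_of_mem (Finset.mem_of_mem_erase hm2)
          _ ≤ k := by omega
      rw [hxeq]
      exact hadd x' δ S hSup hδ (ih x' hcard' hx'mono)

lemma key_ineq (s : Fin n → Fin n → ℝ) (lam x y : Fin n → ℝ)
    (hs : ∀ i j, 0 ≤ s i j) (hbal : ∀ j, ∑ i, s i j = ∑ i, s j i)
    (hx : ∀ i j, lam i ≤ lam j → x i ≤ x j)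
    (hy : ∀ i j, lam i ≤ lam j → y j ≤ y i) :
    ∑ i, ∑ j, s i j * (x i * y i) ≤ ∑ i, ∑ j, s i j * (x i * y j) := by
  -- Work with D x y := ∑ i, ∑ j, s i j * x i * (y j - y i)
  set D : (Fin n → ℝ) → (Fin n → ℝ) → ℝ :=
    fun x y => ∑ i, ∑ j, s i j * (x i * (y j - y i)) with hD
  have hDadd_x : ∀ x₁ x₂ y, D (fun i => x₁ i + x₂ i) y = D x₁ y + D x₂ y := by
    intro x₁ x₂ y
    rw [hD]
    simp only [← Finset.sum_add_distrib]
    refine Finset.sum_congr rfl fun i _ => Finset.sum_congr rfl fun j _ => by ring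
  have hDadd_y : ∀ x y₁ y₂, D x (fun i => y₁ i + y₂ i) = D x y₁ + D x y₂ := by
    intro x y₁ y₂
    rw [hD]
    simp only [← Finset.sum_add_distrib]
    refine Finset.sum_congr rfl fun i _ => Finset.sum_congr rfl fun j _ => by ring
  have hDconst_y : ∀ x c, D x (fun _ => c) = 0 := by
    intro x c
    rw [hD]
    simp
  have hDconst_x : ∀ c y, D (fun _ => c) y = 0 := by
    intro c y
    rw [hD]
    have h1 : ∀ i j : Fin n, s i j * (c * (y j - y i))
        = s i j * (c * y j) - s i j * (c * y i) := fun i j => by ring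
    simp only [h1, Finset.sum_sub_distrib]
    rw [swap_phi s hbal (fun i => c * y i)]
    ring
  have hDscale : ∀ (c : ℝ) (S : Finset (Fin n)) y,
      D (fun i => if i ∈ S then c else 0) y
        = c * D (fun i => if i ∈ S then 1 else 0) y := by
    intro c S y
    rw [hD]
    simp only [Finset.mul_sum]
    refine Finset.sum_congr rfl fun i _ => Finset.sum_congr rfl fun j _ => by
      by_cases h : i ∈ S <;> simp [h] <;> ring
  have hDscale_y : ∀ (c : ℝ) (T : Finset (Fin n)) x,
      D x (fun i => if i ∈ T then c else 0)
        = c * D x (fun i => if i ∈ T then 1 else 0) := by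
    intro c T x
    rw [hD]
    simp only [Finset.mul_sum]
    refine Finset.sum_congr rfl fun i _ => Finset.sum_congr rfl fun j _ => by
      by_cases h1 : i ∈ T <;> by_cases h2 : j ∈ T <;> simp [h1, h2] <;> ring
  -- indicator/indicator case
  have hind : ∀ (S T : Finset (Fin n)),
      (∀ i j, lam i ≤ lam j → i ∈ S → j ∈ S) →
      (∀ i j, lam j ≤ lam i → i ∈ T → j ∈ T) →
      0 ≤ D (fun i => if i ∈ S then 1 else 0) (fun i => if i ∈ T then 1 else 0) := by
    intro S T hSu hTl
    have hexp : D (fun i => if i ∈ S then 1 else 0) (fun i => if i ∈ T then 1 else 0)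
        = ∑ i ∈ S, ∑ j ∈ T, s i j - ∑ i ∈ S ∩ T, ∑ j, s i j := by
      rw [hD]
      simp only
      have e1 : ∀ i : Fin n,
          (∑ j, s i j * ((if i ∈ S then (1:ℝ) else 0) *
            ((if j ∈ T then (1:ℝ) else 0) - (if i ∈ T then (1:ℝ) else 0))))
          = (if i ∈ S then ∑ j ∈ T, s i j else 0)
            - (if i ∈ S ∩ T then ∑ j, s i j else 0) := by
        intro i
        by_cases hiS : i ∈ S <;> by_cases hiT : i ∈ T <;>
          simp [hiS, hiT, Finset.mem_inter, mul_sub, mul_ite, mul_one, mul_zero,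
            Finset.sum_sub_distrib, Finset.sum_ite_mem, Finset.univ_inter]
      simp only [e1, Finset.sum_sub_distrib]
      congr 1
      · rw [Finset.sum_ite_mem, Finset.univ_inter]
      · rw [Finset.sum_ite_mem, Finset.univ_inter]
    rw [hexp, sub_nonneg]
    exact indic_le s hs hbal lam S T hSu hTl
  -- fixed upper-indicator x, general antitone y
  have hlem1 : ∀ (S : Finset (Fin n)), (∀ i j, lam i ≤ lam j → i ∈ S → j ∈ S) →
      0 ≤ D (fun i => if i ∈ S then 1 else 0) y := by
    intro S hSu
    refine mono_induction (fun i => -lam i)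
      (fun y => 0 ≤ D (fun i => if i ∈ S then 1 else 0) y) ?_ ?_ y ?_
    · intro c; rw [hDconst_y]
    · intro y0 c T hTu h0c hy0
      have := hDadd_y (fun i => if i ∈ S then 1 else 0) y0 (fun i => if i ∈ T then c else 0)
      rw [this, hDscale_y]
      have hT : ∀ i j, lam j ≤ lam i → i ∈ T → j ∈ T := by
        intro i j hij hi
        exact hTu i j (show -lam i ≤ -lam j by linarith) hi
      exact add_nonneg hy0 (mul_nonneg h0c (hind S T hSu hT))
    · intro i j hij
      have hij' : -lam i ≤ -lam j := hij
      exact hy j i (by linarith)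
  have hmain : 0 ≤ D x y := by
    refine mono_induction lam (fun x => 0 ≤ D x y) ?_ ?_ x hx
    · intro c; rw [hDconst_x]
    · intro x0 c S hSu h0c hx0
      rw [hDadd_x, hDscale]
      exact add_nonneg hx0 (mul_nonneg h0c (hlem1 S hSu))
  have hsplit : D x y = (∑ i, ∑ j, s i j * (x i * y j)) - ∑ i, ∑ j, s i j * (x i * y i) := by
    rw [hD]
    have h1 : ∀ i j : Fin n, s i j * (x i * (y j - y i))
        = s i j * (x i * y j) - s i j * (x i * y i) := fun i j => by ring
    simp only [h1, Finset.sum_sub_distrib]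
  linarith

end Comb



variable {n : ℕ}

lemma trace_re_eq (M : Matrix (Fin n) (Fin n) ℂ) :
    (Matrix.trace (Mᴴ * M)).re = ∑ i, ∑ j, Complex.normSq (M i j) := by
  rw [Matrix.trace]
  simp only [Matrix.diag, Matrix.mul_apply, Matrix.conjTranspose_apply, Complex.re_sum]
  rw [Finset.sum_comm]
  refine Finset.sum_congr rfl fun i _ => Finset.sum_congr rfl fun j _ => ?_
  have : star (M i j) * M i j = (Complex.normSq (M i j) : ℂ) := by
    rw [Complex.normSq_eq_conj_mul_self]; rfl
  rw [this, Complex.ofReal_re]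

lemma frob_conj (U M : Matrix (Fin n) (Fin n) ℂ) (hU1 : star U * U = 1) :
    Real.sqrt ((Matrix.trace ((U * M * star U)ᴴ * (U * M * star U))).re)
      = Real.sqrt ((Matrix.trace (Mᴴ * M)).re) := by
  have h1 : (U * M * star U)ᴴ * (U * M * star U) = U * (Mᴴ * M) * star U := by
    simp only [← Matrix.star_eq_conjTranspose, StarMul.star_mul, star_star]
    calc U * (star M * star U) * (U * M * star U)
        = U * (star M * (star U * (U * (M * star U)))) := by
          simp only [Matrix.mul_assoc]
      _ = U * (star M * M) * star U := by
          rw [← Matrix.mul_assoc (star U) U, hU1, Matrix.one_mul,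
            Matrix.mul_assoc, Matrix.mul_assoc]
  rw [h1, Matrix.trace_mul_cycle, ← Matrix.mul_assoc, hU1, Matrix.one_mul]


theorem frobenius_chebyshev_antimonotone {n : ℕ} (A B Z : Matrix (Fin n) (Fin n) ℂ)
    (hA : A.PosSemidef) (hB : B.PosSemidef) (hZ : Zᴴ * Z = Z * Zᴴ)
    (hanti : AntimonotonePair A B) :
    frobNorm (A * Z * B) ≥ frobNorm (Z * A * B) := by
  obtain ⟨C, hC, f, g, hf, hg, hAeq, hBeq⟩ := hanti
  simp only [hermFun] at hAeq hBeq
  set U : Matrix (Fin n) (Fin n) ℂ := (hC.eigenvectorUnitary : Matrix (Fin n) (Fin n) ℂ)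
    with hUdef
  set lam := hC.eigenvalues with hlamdef
  have hUmem := hC.eigenvectorUnitary.2
  rw [Unitary.mem_iff] at hUmem
  have hU1 : star U * U = 1 := hUmem.1
  have hU2 : U * star U = 1 := hUmem.2
  have hcanc1 : ∀ X : Matrix (Fin n) (Fin n) ℂ, star U * (U * X) = X := fun X => by
    rw [← Matrix.mul_assoc, hU1, Matrix.one_mul]
  have hcanc2 : ∀ X : Matrix (Fin n) (Fin n) ℂ, U * (star U * X) = X := fun X => by
    rw [← Matrix.mul_assoc, hU2, Matrix.one_mul]
  set Df : Matrix (Fin n) (Fin n) ℂ := Matrix.diagonal (fun i => (f (lam i) : ℂ)) with hDfdef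
  set Dg : Matrix (Fin n) (Fin n) ℂ := Matrix.diagonal (fun i => (g (lam i) : ℂ)) with hDgdef
  set W : Matrix (Fin n) (Fin n) ℂ := star U * Z * U with hWdef
  have hAZB : A * Z * B = U * (Df * W * Dg) * star U := by
    rw [hAeq, hBeq, hWdef]
    simp only [Matrix.mul_assoc]
  have hZAB : Z * A * B = U * (W * (Df * Dg)) * star U := by
    rw [hAeq, hBeq, hWdef]
    simp only [Matrix.mul_assoc, hcanc1, hcanc2]
  have hZ' : star Z * Z = Z * star Z := by
    rw [Matrix.star_eq_conjTranspose]; exact hZ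
  have hWnormal : star W * W = W * star W := by
    have h1 : star W = star U * star Z * U := by
      rw [hWdef]
      simp only [StarMul.star_mul, star_star, Matrix.mul_assoc]
    rw [h1, hWdef]
    simp only [Matrix.mul_assoc, hcanc1, hcanc2]
    rw [← Matrix.mul_assoc (star Z) Z, hZ', Matrix.mul_assoc]
  set s := fun i j => Complex.normSq (W i j) with hsdef
  have hs : ∀ i j, 0 ≤ s i j := fun i j => Complex.normSq_nonneg _
  have hbal : ∀ j, ∑ i, s i j = ∑ i, s j i := by
    intro j
    have h : (star W * W) j j = (W * star W) j j := by rw [hWnormal]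
    rw [Matrix.mul_apply, Matrix.mul_apply] at h
    simp only [Matrix.star_apply] at h
    have h2 := congrArg Complex.re h
    rw [Complex.re_sum, Complex.re_sum] at h2
    calc ∑ i, s i j = ∑ i, (star (W i j) * W i j).re := by
          refine Finset.sum_congr rfl fun i _ => ?_
          have : star (W i j) * W i j = (Complex.normSq (W i j) : ℂ) := by
            rw [Complex.normSq_eq_conj_mul_self]; rfl
          rw [this, Complex.ofReal_re]
      _ = ∑ i, (W j i * star (W j i)).re := h2
      _ = ∑ i, s j i := by
          refine Finset.sum_congr rfl fun i _ => ?_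
          have : W j i * star (W j i) = (Complex.normSq (W j i) : ℂ) := Complex.mul_conj _
          rw [this, Complex.ofReal_re]
  -- nonnegativity of f, g at eigenvalues
  have hDfPSD : Df.PosSemidef := by
    have h2 : Uᴴ * A * U = Df := by
      rw [← Matrix.star_eq_conjTranspose, hAeq]
      simp only [Matrix.mul_assoc, hcanc1, hU1, Matrix.mul_one]
    exact h2 ▸ (hA.conjTranspose_mul_mul_same U)
  have hDgPSD : Dg.PosSemidef := by
    have h2 : Uᴴ * B * U = Dg := by
      rw [← Matrix.star_eq_conjTranspose, hBeq]
      simp only [Matrix.mul_assoc, hcanc1, hU1, Matrix.mul_one]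
    exact h2 ▸ (hB.conjTranspose_mul_mul_same U)
  have hdiag : ∀ (d : Fin n → ℝ), (Matrix.diagonal (fun i => (d i : ℂ))).PosSemidef →
      ∀ i, 0 ≤ d i := by
    intro d hd i
    have h := hd.dotProduct_mulVec_nonneg (Pi.single i 1)
    have heq : star (Pi.single i 1) ⬝ᵥ
        ((Matrix.diagonal (fun k => (d k : ℂ))).mulVec (Pi.single i 1)) = (d i : ℂ) := by
      rw [Matrix.diagonal_mulVec_single]
      simp [dotProduct, Pi.single_apply, Finset.sum_ite_eq]
    rw [heq] at h
    exact Complex.zero_le_real.mp h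
  have hf0 : ∀ i, 0 ≤ f (lam i) := hdiag _ (hDfdef ▸ hDfPSD)
  have hg0 : ∀ i, 0 ≤ g (lam i) := hdiag _ (hDgdef ▸ hDgPSD)
  set x := fun i => f (lam i) * f (lam i) with hxdef
  set y := fun i => g (lam i) * g (lam i) with hydef
  have hx : ∀ i j, lam i ≤ lam j → x i ≤ x j := fun i j hij =>
    mul_self_le_mul_self (hf0 i) (hf hij)
  have hy : ∀ i j, lam i ≤ lam j → y j ≤ y i := fun i j hij =>
    mul_self_le_mul_self (hg0 j) (hg hij)
  have hM1 : ∀ i j, Complex.normSq ((Df * W * Dg) i j) = s i j * (x i * y j) := by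
    intro i j
    rw [Matrix.mul_diagonal, Matrix.diagonal_mul, Complex.normSq_mul, Complex.normSq_mul,
      Complex.normSq_ofReal, Complex.normSq_ofReal, hsdef, hxdef, hydef]
    ring
  have hM2 : ∀ i j, Complex.normSq ((W * (Df * Dg)) i j) = s i j * (x j * y j) := by
    intro i j
    rw [Matrix.diagonal_mul_diagonal, Matrix.mul_diagonal, Complex.normSq_mul,
      Complex.normSq_mul, Complex.normSq_ofReal, Complex.normSq_ofReal, hsdef, hxdef, hydef]
  rw [ge_iff_le, hAZB, hZAB]
  unfold frobNorm
  rw [frob_conj U _ hU1, frob_conj U _ hU1]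
  apply Real.sqrt_le_sqrt
  rw [trace_re_eq, trace_re_eq]
  calc ∑ i, ∑ j, Complex.normSq ((W * (Df * Dg)) i j)
      = ∑ i, ∑ j, s i j * ((fun k => x k * y k) j) := by
        exact Finset.sum_congr rfl fun i _ => Finset.sum_congr rfl fun j _ => hM2 i j
    _ = ∑ i, ∑ j, s i j * ((fun k => x k * y k) i) := swap_phi s hbal _
    _ = ∑ i, ∑ j, s i j * (x i * y i) := rfl
    _ ≤ ∑ i, ∑ j, s i j * (x i * y j) := key_ineq s lam x y hs hbal hx hy
    _ = ∑ i, ∑ j, Complex.normSq ((Df * W * Dg) i j) :=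
        Finset.sum_congr rfl fun i _ => Finset.sum_congr rfl fun j _ => (hM1 i j).symm
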